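/- Let μ ∈ ℝ^n satisfy 0 ≤ μ_1 ≤ μ_2 ≤ ⋯ ≤ μ_n and ∑_{i=1}^n μ_i = 1. Let Z be an integrable real random variable with finite essential supremum, let Z_1,…,Z_{n−1} be iid with the same law as Z, set Z_n := esssup Z, and let Z_(1) ≤ ⋯ ≤ Z_(n) be the order statistics of Z_1,…,Z_n. Let U_1,…,U_{n−1} be iid uniform on [0,1] with order statistics U_(1) ≤ ⋯ ≤ U_(n−1), and set U_(n) := 1. Then P[ ∑_{i=1}^n μ_i Z_(i) ≥ E[Z] ] ≥ P[ ∑_{i=1}^k μ_i ≤ U_(k) for all k ∈ {1,…,n} ]. -/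

import Mathlib

open MeasureTheory ProbabilityTheory

/-- Increasing rearrangement (order statistics) of a finite tuple. -/
noncomputable def sortedVec {α : Type*} [LinearOrder α] {n : ℕ} (z : Fin n → α) : Fin n → α :=
  z ∘ Tuple.sort z

/-- The full sample vector `(Z_1, …, Z_{n-1}, M)`. -/
def fullVec {Ω : Type*} {n : ℕ} (Zs : Fin (n - 1) → Ω → ℝ) (M : ℝ) (i : Fin n) (ω : Ω) : ℝ :=
  if h : (i : ℕ) < n - 1 then Zs ⟨(i : ℕ), h⟩ ω else M

/-- The augmented uniform order statistics `U_(k)`, `k ∈ [n]`, with the convention `U_(n) := 1`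
(the index `k : Fin n` is `0`-based: `augOrder U k = U_(k+1)`). -/
noncomputable def augOrder {n : ℕ} (U : Fin (n - 1) → ℝ) (k : Fin n) : ℝ :=
  if h : (k : ℕ) + 1 < n then sortedVec U ⟨(k : ℕ), by omega⟩ else 1

section Aux

open Set Filter

set_option linter.unusedSectionVars false

namespace Stmt11


variable (ν : Measure ℝ) [IsProbabilityMeasure ν] (M : ℝ)

/-- Quantile-type function, set to `M` outside `(0,1]`. -/
noncomputable def qt (t : ℝ) : ℝ :=
  if t ∈ Set.Ioc (0:ℝ) 1 then sInf {x | t ≤ cdf ν x} else M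

variable {ν M}

lemma S_bddBelow {t : ℝ} (ht : 0 < t) : BddBelow {x | t ≤ cdf ν x} := by
  have h : ∀ᶠ x in atBot, cdf ν x < t := (tendsto_cdf_atBot ν).eventually_lt_const ht
  obtain ⟨x0, hx0⟩ := eventually_atBot.mp h
  refine ⟨x0, fun y hy => ?_⟩
  by_contra hlt
  exact absurd hy (by simpa using (hx0 y (le_of_not_ge hlt)).not_ge)

section
variable (hM1 : cdf ν M = 1)
include hM1

lemma S_nonempty {t : ℝ} (ht : t ≤ 1) : {x | t ≤ cdf ν x}.Nonempty :=
  ⟨M, by simp only [Set.mem_setOf_eq, hM1]; exact ht⟩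

lemma qt_eq {t : ℝ} (ht : t ∈ Set.Ioc (0:ℝ) 1) : qt ν M t = sInf {x | t ≤ cdf ν x} :=
  if_pos ht

lemma le_cdf_qt {t : ℝ} (ht : t ∈ Set.Ioc (0:ℝ) 1) : t ≤ cdf ν (qt ν M t) := by
  rw [qt_eq hM1 ht]
  set a := sInf {x | t ≤ cdf ν x} with ha
  have h1 : ∀ x, a < x → t ≤ cdf ν x := by
    intro x hx
    obtain ⟨s, hs, hsx⟩ := (csInf_lt_iff (S_bddBelow ht.1) (S_nonempty hM1 ht.2)).mp hx
    exact le_trans hs ((cdf ν).mono hsx.le)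
  have h2 : Tendsto (cdf ν) (nhdsWithin a (Ioi a)) (nhds (cdf ν a)) :=
    ((cdf ν).right_continuous a).mono_left (nhdsWithin_mono a Ioi_subset_Ici_self)
  exact ge_of_tendsto h2 (eventually_mem_nhdsWithin.mono fun x hx => h1 x hx)

lemma qt_le_iff {t x : ℝ} (ht : t ∈ Set.Ioc (0:ℝ) 1) :
    qt ν M t ≤ x ↔ t ≤ cdf ν x := by
  constructor
  · intro h; exact le_trans (le_cdf_qt hM1 ht) ((cdf ν).mono h)
  · intro h; rw [qt_eq hM1 ht]; exact csInf_le (S_bddBelow ht.1) h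

lemma qt_le_M {t : ℝ} (ht : t ∈ Set.Ioc (0:ℝ) 1) : qt ν M t ≤ M :=
  (qt_le_iff hM1 ht).mpr (by rw [hM1]; exact ht.2)

lemma qt_monotoneOn : MonotoneOn (qt ν M) (Set.Ioc (0:ℝ) 1) := by
  intro s hs t ht hst
  rw [qt_eq hM1 hs, qt_eq hM1 ht]
  exact csInf_le_csInf (S_bddBelow hs.1) (S_nonempty hM1 ht.2)
    (fun x hx => le_trans hst hx)

lemma qt_measurable : Measurable (qt ν M) := by
  apply measurable_of_Iic
  intro y
  have : qt ν M ⁻¹' Iic y =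
      (Set.Ioc (0:ℝ) 1 ∩ Iic (cdf ν y)) ∪ ((Set.Ioc (0:ℝ) 1)ᶜ ∩ {t : ℝ | M ≤ y}) := by
    ext t
    by_cases ht : t ∈ Set.Ioc (0:ℝ) 1
    · simp only [Set.mem_preimage, Set.mem_Iic, Set.mem_union, Set.mem_inter_iff, ht,
        Set.mem_compl_iff, not_true, false_and, or_false, true_and]
      exact qt_le_iff hM1 ht
    · simp only [Set.mem_preimage, Set.mem_Iic, Set.mem_union, Set.mem_inter_iff, ht,
        Set.mem_compl_iff, not_false_iff, true_and, false_and, false_or, Set.mem_setOf_eq,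
        qt]
      simp
  rw [this]
  by_cases hMy : M ≤ y
  · have : {t : ℝ | M ≤ y} = Set.univ := by simp [hMy]
    rw [this]
    exact (measurableSet_Ioc.inter measurableSet_Iic).union
      (measurableSet_Ioc.compl.inter MeasurableSet.univ)
  · have : {t : ℝ | M ≤ y} = (∅ : Set ℝ) := by simp [hMy]
    rw [this]
    simpa using (measurableSet_Ioc.inter measurableSet_Iic).union
      (measurableSet_Ioc.compl.inter MeasurableSet.empty)

lemma qt_map_eq : Measure.map (qt ν M) (volume.restrict (Set.Icc (0:ℝ) 1)) = ν := by
  haveI : IsProbabilityMeasure (volume.restrict (Set.Icc (0:ℝ) 1)) :=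
    ⟨by simp [Real.volume_Icc]⟩
  haveI : IsProbabilityMeasure (Measure.map (qt ν M) (volume.restrict (Set.Icc (0:ℝ) 1))) :=
    Measure.isProbabilityMeasure_map (qt_measurable hM1).aemeasurable
  refine Measure.ext_of_Iic _ _ (fun y => ?_)
  rw [Measure.map_apply (qt_measurable hM1) measurableSet_Iic,
    Measure.restrict_apply' measurableSet_Icc]
  have hsub : qt ν M ⁻¹' Iic y ∩ Set.Icc (0:ℝ) 1 ⊆
      {(0:ℝ)} ∪ (qt ν M ⁻¹' Iic y ∩ Set.Ioc (0:ℝ) 1) := by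
    intro t ⟨h1, h2⟩
    rcases eq_or_lt_of_le h2.1 with h | h
    · exact Or.inl (by simp [← h])
    · exact Or.inr ⟨h1, h, h2.2⟩
  have hsub2 : qt ν M ⁻¹' Iic y ∩ Set.Ioc (0:ℝ) 1 ⊆ qt ν M ⁻¹' Iic y ∩ Set.Icc (0:ℝ) 1 :=
    Set.inter_subset_inter_right _ Set.Ioc_subset_Icc_self
  have hkey : qt ν M ⁻¹' Iic y ∩ Set.Ioc (0:ℝ) 1 = Set.Ioc (0:ℝ) (min 1 (cdf ν y)) := by
    ext t
    simp only [Set.mem_inter_iff, Set.mem_preimage, Set.mem_Iic, Set.mem_Ioc, lt_min_iff,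
      le_min_iff]
    constructor
    · rintro ⟨h1, h2, h3⟩
      exact ⟨h2, h3, (qt_le_iff hM1 ⟨h2, h3⟩).mp h1⟩
    · rintro ⟨h1, h2, h3⟩
      exact ⟨(qt_le_iff hM1 ⟨h1, h2⟩).mpr h3, h1, h2⟩
  have heq : volume (qt ν M ⁻¹' Iic y ∩ Set.Icc (0:ℝ) 1) =
      volume (qt ν M ⁻¹' Iic y ∩ Set.Ioc (0:ℝ) 1) := by
    refine le_antisymm ?_ (measure_mono hsub2)
    calc volume (qt ν M ⁻¹' Iic y ∩ Set.Icc (0:ℝ) 1)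
        ≤ volume ({(0:ℝ)} ∪ (qt ν M ⁻¹' Iic y ∩ Set.Ioc (0:ℝ) 1)) := measure_mono hsub
      _ ≤ volume ({(0:ℝ)} : Set ℝ) + volume (qt ν M ⁻¹' Iic y ∩ Set.Ioc (0:ℝ) 1) :=
          measure_union_le _ _
      _ = volume (qt ν M ⁻¹' Iic y ∩ Set.Ioc (0:ℝ) 1) := by simp
  rw [heq, hkey, Real.volume_Ioc]
  have hc0 : 0 ≤ cdf ν y := cdf_nonneg ν y
  have hc1 : cdf ν y ≤ 1 := cdf_le_one ν y
  rw [min_eq_right hc1, sub_zero, ofReal_cdf]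

end



lemma sorted_comp {N : ℕ} (f : ℝ → ℝ) (s : Set ℝ) (hf : MonotoneOn f s)
    (u : Fin N → ℝ) (hu : ∀ i, u i ∈ s) :
    sortedVec (f ∘ u) = f ∘ sortedVec u := by
  have hmono : Monotone ((f ∘ u) ∘ Tuple.sort u) := by
    intro i j hij
    exact hf (hu _) (hu _) (Tuple.monotone_sort u hij)
  have h := (Tuple.comp_sort_eq_comp_iff_monotone (f := f ∘ u) (σ := Tuple.sort u)).mpr hmono
  unfold sortedVec
  rw [← h]
  rfl

lemma sorted_full {m : ℕ} (z : Fin m → ℝ) (M : ℝ) (hz : ∀ i, z i ≤ M) :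
    sortedVec (fun k : Fin (m+1) => if h : (k:ℕ) < m then z ⟨k, h⟩ else M)
      = fun k : Fin (m+1) => if h : (k:ℕ) < m then sortedVec z ⟨k, h⟩ else M := by
  set f : Fin (m+1) → ℝ := fun k => if h : (k:ℕ) < m then z ⟨k, h⟩ else M with hf
  set τ := Tuple.sort z with hτ
  set σ : Equiv.Perm (Fin (m+1)) :=
    (Equiv.permCongr finSuccEquivLast.symm) (Equiv.optionCongr τ) with hσ
  have hσcast : ∀ i : Fin m, σ (Fin.castSucc i) = Fin.castSucc (τ i) := by
    intro i
    simp [hσ, Equiv.permCongr_apply, finSuccEquivLast_castSucc, finSuccEquivLast_symm_some]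
  have hσlast : σ (Fin.last m) = Fin.last m := by
    simp [hσ, Equiv.permCongr_apply, finSuccEquivLast_last, finSuccEquivLast_symm_none]
  have h1 : f ∘ σ = fun k : Fin (m+1) => if h : (k:ℕ) < m then sortedVec z ⟨k, h⟩ else M := by
    funext k
    refine Fin.lastCases ?_ (fun i => ?_) k
    · simp only [Function.comp_apply, hσlast, hf, Fin.val_last, lt_irrefl, dif_neg]
      simp
    · simp only [Function.comp_apply, hσcast, hf, Fin.coe_castSucc, Fin.is_lt, dif_pos,
        Fin.eta]
      rfl
  have h2 : Monotone (fun k : Fin (m+1) => if h : (k:ℕ) < m then sortedVec z ⟨k, h⟩ else M) := by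
    intro a b hab
    by_cases ha : (a:ℕ) < m
    · by_cases hb : (b:ℕ) < m
      · simp only [dif_pos ha, dif_pos hb]
        exact Tuple.monotone_sort z (Fin.mk_le_mk.mpr (Fin.le_def.mp hab))
      · simp only [dif_pos ha, dif_neg hb]
        exact hz _
    · have hb : ¬ (b:ℕ) < m := fun hb => ha (lt_of_le_of_lt (by exact_mod_cast hab) hb)
      simp only [dif_neg ha, dif_neg hb]
      exact le_rfl
  rw [← h1] at h2
  have := (Tuple.comp_sort_eq_comp_iff_monotone (f := f) (σ := σ)).mpr h2
  unfold sortedVec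
  rw [← this, h1]
  rfl



/-- partial sums of μ over indices with value < j -/
noncomputable def psum {n : ℕ} (μ : Fin n → ℝ) (j : ℕ) : ℝ :=
  ∑ i ∈ Finset.univ.filter (fun i : Fin n => (i : ℕ) < j), μ i

lemma psum_zero {n : ℕ} (μ : Fin n → ℝ) : psum μ 0 = 0 := by
  simp [psum]

lemma psum_top {n : ℕ} (μ : Fin n → ℝ) (hμ_sum : ∑ i, μ i = 1) : psum μ n = 1 := by
  rw [psum, ← hμ_sum]
  congr 1
  apply Finset.filter_true_of_mem
  intro i _
  exact i.isLt

lemma psum_succ {n : ℕ} (μ : Fin n → ℝ) (j : ℕ) (hj : j < n) :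
    psum μ (j+1) = psum μ j + μ ⟨j, hj⟩ := by
  rw [psum, psum]
  have : Finset.univ.filter (fun i : Fin n => (i : ℕ) < j + 1) =
      insert ⟨j, hj⟩ (Finset.univ.filter (fun i : Fin n => (i : ℕ) < j)) := by
    ext i
    simp only [Finset.mem_filter, Finset.mem_univ, true_and, Finset.mem_insert]
    constructor
    · intro h
      rcases Nat.lt_succ_iff_lt_or_eq.mp h with h | h
      · exact Or.inr h
      · exact Or.inl (Fin.ext h)
    · rintro (rfl | h)
      · exact Nat.lt_succ_self j
      · exact Nat.lt_succ_of_lt h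
  rw [this, Finset.sum_insert (by simp)]
  ring

lemma psum_nonneg {n : ℕ} (μ : Fin n → ℝ) (hnn : ∀ i, 0 ≤ μ i) (j : ℕ) : 0 ≤ psum μ j :=
  Finset.sum_nonneg (fun i _ => hnn i)

lemma psum_mono {n : ℕ} (μ : Fin n → ℝ) (hnn : ∀ i, 0 ≤ μ i) {j j' : ℕ} (h : j ≤ j') :
    psum μ j ≤ psum μ j' := by
  apply Finset.sum_le_sum_of_subset_of_nonneg
  · intro i hi
    simp only [Finset.mem_filter, Finset.mem_univ, true_and] at hi ⊢
    omega
  · intro i _ _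
    exact hnn i

lemma psum_le_one {n : ℕ} (μ : Fin n → ℝ) (hnn : ∀ i, 0 ≤ μ i) (hμ_sum : ∑ i, μ i = 1)
    (j : ℕ) : psum μ j ≤ 1 := by
  rcases le_or_gt j n with h | h
  · rw [← psum_top μ hμ_sum]; exact psum_mono μ hnn h
  · apply le_of_eq
    rw [← psum_top μ hμ_sum, psum, psum,
      Finset.filter_true_of_mem (fun i _ => lt_of_lt_of_le i.isLt h.le),
      Finset.filter_true_of_mem (fun (i : Fin n) _ => i.isLt)]

/-- Key integral estimate. -/
lemma key_integral {n : ℕ} (μ : Fin n → ℝ) (hnn : ∀ i, 0 ≤ μ i) (hμ_sum : ∑ i, μ i = 1)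
    (f : ℝ → ℝ) (hf_int : IntegrableOn f (Set.Ioc (0:ℝ) 1) volume)
    (hf_mono : MonotoneOn f (Set.Ioc (0:ℝ) 1))
    (v : Fin n → ℝ) (hv : ∀ k, v k ∈ Set.Ioc (0:ℝ) 1)
    (hSv : ∀ k : Fin n, ∑ i ∈ Finset.univ.filter (fun i : Fin n => i ≤ k), μ i ≤ v k) :
    ∫ t in Set.Ioc (0:ℝ) 1, f t ≤ ∑ k, μ k * f (v k) := by
  have hpsum_eq : ∀ k : Fin n,
      psum μ ((k : ℕ) + 1) = ∑ i ∈ Finset.univ.filter (fun i : Fin n => i ≤ k), μ i := by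
    intro k
    rw [psum]
    congr 1
    ext i
    simp only [Finset.mem_filter, Finset.mem_univ, true_and, Nat.lt_succ_iff, Fin.le_def]
  have main : ∀ j ≤ n, ∫ t in Set.Ioc (0:ℝ) (psum μ j), f t ≤
      ∑ k ∈ Finset.univ.filter (fun k : Fin n => (k : ℕ) < j), μ k * f (v k) := by
    intro j
    induction j with
    | zero =>
      intro _
      rw [psum_zero]
      simp
    | succ j ih =>
      intro hj1
      have hj : j < n := hj1
      have h0j : (0:ℝ) ≤ psum μ j := psum_nonneg μ hnn j
      have hjj : psum μ j ≤ psum μ (j+1) := psum_mono μ hnn (Nat.le_succ j)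
      have hj1' : psum μ (j+1) ≤ 1 := psum_le_one μ hnn hμ_sum (j+1)
      have hsplit : Set.Ioc (0:ℝ) (psum μ j) ∪ Set.Ioc (psum μ j) (psum μ (j+1)) =
          Set.Ioc (0:ℝ) (psum μ (j+1)) := Set.Ioc_union_Ioc_eq_Ioc h0j hjj
      have hint1 : IntegrableOn f (Set.Ioc (0:ℝ) (psum μ j)) volume :=
        hf_int.mono_set (Set.Ioc_subset_Ioc le_rfl (le_trans hjj hj1'))
      have hint2 : IntegrableOn f (Set.Ioc (psum μ j) (psum μ (j+1))) volume :=
        hf_int.mono_set (fun t ht => ⟨lt_of_le_of_lt h0j ht.1, le_trans ht.2 hj1'⟩)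
      have hdisj : Disjoint (Set.Ioc (0:ℝ) (psum μ j)) (Set.Ioc (psum μ j) (psum μ (j+1))) :=
        Set.Ioc_disjoint_Ioc_of_le le_rfl
      have heq : ∫ t in Set.Ioc (0:ℝ) (psum μ (j+1)), f t =
          (∫ t in Set.Ioc (0:ℝ) (psum μ j), f t) +
          ∫ t in Set.Ioc (psum μ j) (psum μ (j+1)), f t := by
        rw [← hsplit, setIntegral_union hdisj measurableSet_Ioc hint1 hint2]
      have hstep : ∫ t in Set.Ioc (psum μ j) (psum μ (j+1)), f t ≤ μ ⟨j, hj⟩ * f (v ⟨j, hj⟩) := by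
        have hμj : psum μ (j+1) - psum μ j = μ ⟨j, hj⟩ := by rw [psum_succ μ j hj]; ring
        have hsub : Set.Ioc (psum μ j) (psum μ (j+1)) ⊆ Set.Ioc (0:ℝ) 1 :=
          fun t ht => ⟨lt_of_le_of_lt h0j ht.1, le_trans ht.2 hj1'⟩
        have hub : psum μ (j+1) ≤ v ⟨j, hj⟩ := by
          rw [hpsum_eq ⟨j, hj⟩] at *
          exact hSv ⟨j, hj⟩
        have hmono_pt : ∀ t ∈ Set.Ioc (psum μ j) (psum μ (j+1)), f t ≤ f (v ⟨j, hj⟩) := by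
          intro t ht
          exact hf_mono (hsub ht) (hv _) (le_trans ht.2 hub)
        calc ∫ t in Set.Ioc (psum μ j) (psum μ (j+1)), f t
            ≤ ∫ _ in Set.Ioc (psum μ j) (psum μ (j+1)), f (v ⟨j, hj⟩) :=
              setIntegral_mono_on hint2 (integrableOn_const measure_Ioc_lt_top.ne)
                measurableSet_Ioc hmono_pt
          _ = (volume (Set.Ioc (psum μ j) (psum μ (j+1)))).toReal * f (v ⟨j, hj⟩) := by
              rw [setIntegral_const]; rfl
          _ = μ ⟨j, hj⟩ * f (v ⟨j, hj⟩) := by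
              rw [Real.volume_Ioc, ENNReal.toReal_ofReal (by linarith), hμj]
      have hsum : ∑ k ∈ Finset.univ.filter (fun k : Fin n => (k : ℕ) < j + 1), μ k * f (v k) =
          (∑ k ∈ Finset.univ.filter (fun k : Fin n => (k : ℕ) < j), μ k * f (v k)) +
          μ ⟨j, hj⟩ * f (v ⟨j, hj⟩) := by
        have : Finset.univ.filter (fun i : Fin n => (i : ℕ) < j + 1) =
            insert ⟨j, hj⟩ (Finset.univ.filter (fun i : Fin n => (i : ℕ) < j)) := by
          ext i
          simp only [Finset.mem_filter, Finset.mem_univ, true_and, Finset.mem_insert]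
          constructor
          · intro h
            rcases Nat.lt_succ_iff_lt_or_eq.mp h with h | h
            · exact Or.inr h
            · exact Or.inl (Fin.ext h)
          · rintro (rfl | h)
            · exact Nat.lt_succ_self j
            · exact Nat.lt_succ_of_lt h
        rw [this, Finset.sum_insert (by simp)]
        ring
      rw [heq, hsum]
      exact add_le_add (ih hj.le) hstep
  have := main n le_rfl
  rw [psum_top μ hμ_sum] at this
  convert this using 1
  congr 1
  symm
  apply Finset.filter_true_of_mem
  intro i _
  exact i.isLt

/-- law of an iid vector is the product measure -/
lemma map_pi_of_iid {Ω : Type*} [MeasurableSpace Ω] (P : Measure Ω) [IsProbabilityMeasure P]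
    {m : ℕ} (X : Fin m → Ω → ℝ) (hX : ∀ i, Measurable (X i))
    (hind : iIndepFun X P)
    (ν : Measure ℝ) [IsProbabilityMeasure ν]
    (hlaw : ∀ i, Measure.map (X i) P = ν) :
    Measure.map (fun ω i => X i ω) P = Measure.pi (fun _ => ν) := by
  have hV : Measurable (fun ω (i : Fin m) => X i ω) :=
    measurable_pi_lambda _ (fun i => hX i)
  symm
  apply Measure.pi_eq
  intro s hs
  rw [Measure.map_apply hV (MeasurableSet.pi Set.countable_univ (fun i _ => hs i))]
  have hpre : (fun ω (i : Fin m) => X i ω) ⁻¹' (Set.pi Set.univ s) =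
      ⋂ i ∈ Finset.univ, X i ⁻¹' s i := by
    ext ω
    simp [Set.mem_pi]
  rw [hpre, hind.measure_inter_preimage_eq_mul Finset.univ (fun i _ => hs i)]
  congr 1
  ext i
  rw [← hlaw i, Measure.map_apply (hX i) (hs i)]



lemma measurable_gset {m : ℕ} (μ : Fin (m+1) → ℝ) (M c : ℝ) :
    MeasurableSet {z : Fin m → ℝ |
      c ≤ ∑ k : Fin (m+1), μ k * (if h : (k:ℕ) < m then sortedVec z ⟨(k:ℕ), h⟩ else M)} := by
  have hset : {z : Fin m → ℝ |
      c ≤ ∑ k : Fin (m+1), μ k * (if h : (k:ℕ) < m then sortedVec z ⟨(k:ℕ), h⟩ else M)} =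
      ⋃ σ : Equiv.Perm (Fin m),
        ({z : Fin m → ℝ | Monotone (z ∘ σ)} ∩
         {z : Fin m → ℝ |
          c ≤ ∑ k : Fin (m+1), μ k * (if h : (k:ℕ) < m then (z ∘ σ) ⟨(k:ℕ), h⟩ else M)}) := by
    ext z
    simp only [Set.mem_setOf_eq, Set.mem_iUnion, Set.mem_inter_iff]
    constructor
    · intro h
      exact ⟨Tuple.sort z, Tuple.monotone_sort z, h⟩
    · rintro ⟨σ, hmono, h⟩
      have heq : z ∘ σ = sortedVec z :=
        (Tuple.comp_sort_eq_comp_iff_monotone (f := z) (σ := σ)).mpr hmono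
      rwa [heq] at h
  rw [hset]
  apply MeasurableSet.iUnion
  intro σ
  apply MeasurableSet.inter
  · have : {z : Fin m → ℝ | Monotone (z ∘ σ)} =
        ⋂ (i : Fin m) (j : Fin m) (_ : i ≤ j), {z : Fin m → ℝ | z (σ i) ≤ z (σ j)} := by
      ext z
      simp only [Set.mem_setOf_eq, Set.mem_iInter]
      exact ⟨fun h i j hij => h hij, fun h i j hij => h i j hij⟩
    rw [this]
    exact MeasurableSet.iInter (fun i => MeasurableSet.iInter (fun j =>
      MeasurableSet.iInter (fun _ =>
        measurableSet_le (measurable_pi_apply (σ i)) (measurable_pi_apply (σ j)))))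
  · apply measurableSet_le measurable_const
    apply Finset.measurable_sum
    intro k _
    by_cases h : (k:ℕ) < m
    · simp only [dif_pos h]
      exact ((measurable_pi_apply (σ ⟨(k:ℕ), h⟩) : Measurable fun z : Fin m → ℝ => z (σ ⟨(k:ℕ), h⟩))).const_mul (μ k)
    · simp only [dif_neg h]
      exact measurable_const


end Stmt11

end Aux

/-- let `0 ≤ μ_1 ≤ ⋯ ≤ μ_n` with `∑ μ_i = 1`, let `Z_(1) ≤ ⋯ ≤ Z_(n)` be the
order statistics of iid copies `Z_1, …, Z_{n-1}` of `Z` together with `Z_n := esssup Z`, and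
let `U_(1) ≤ ⋯ ≤ U_(n-1)` be the order statistics of `n-1` iid `U[0,1]` variables with
`U_(n) := 1`. Then `P[∑ μ_i Z_(i) ≥ E[Z]] ≥ P[∑_{i=1}^k μ_i ≤ U_(k), ∀ k ∈ [n]]`. -/
theorem prob_distortion_ge_mean
    {Ω : Type*} [MeasurableSpace Ω] (P : Measure Ω) [IsProbabilityMeasure P]
    (n : ℕ) (hn : 1 ≤ n)
    (μ : Fin n → ℝ) (hμ_mono : Monotone μ) (hμ_nonneg : ∀ i, 0 ≤ μ i)
    (hμ_sum : ∑ i, μ i = 1)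
    (Z : Ω → ℝ) (hZmeas : Measurable Z) (hZint : Integrable Z P)
    (M : ℝ) (hM_ub : ∀ᵐ ω ∂P, Z ω ≤ M) (hM_least : ∀ c : ℝ, (∀ᵐ ω ∂P, Z ω ≤ c) → M ≤ c)
    (Zs : Fin (n - 1) → Ω → ℝ) (hZs_meas : ∀ i, Measurable (Zs i))
    (hZs_indep : iIndepFun Zs P)
    (hZs_law : ∀ i, Measure.map (Zs i) P = Measure.map Z P)
    (Us : Fin (n - 1) → Ω → ℝ) (hUs_meas : ∀ i, Measurable (Us i))
    (hUs_indep : iIndepFun Us P)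
    (hUs_law : ∀ i, Measure.map (Us i) P = volume.restrict (Set.Icc (0 : ℝ) 1)) :
    P {ω | ∀ k : Fin n,
        ∑ i ∈ Finset.univ.filter (fun i : Fin n => i ≤ k), μ i ≤ augOrder (fun i => Us i ω) k} ≤
      P {ω | (∫ x, Z x ∂P) ≤ ∑ i, μ i * sortedVec (fun j => fullVec Zs M j ω) i} := by
  obtain ⟨m, rfl⟩ : ∃ m, n = m + 1 := ⟨n - 1, by omega⟩
  clear hn
  -- the law of Z
  set ν : Measure ℝ := Measure.map Z P with hν
  haveI : IsProbabilityMeasure ν := Measure.isProbabilityMeasure_map hZmeas.aemeasurable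
  have hPZM : P {ω | Z ω ≤ M} = 1 := by
    rw [← prob_compl_eq_zero_iff (measurableSet_le hZmeas measurable_const)]
    have : {ω | Z ω ≤ M}ᶜ = {ω | ¬ Z ω ≤ M} := rfl
    rw [this]
    exact hM_ub
  have hνM : ν (Set.Iic M) = 1 := by
    rw [hν, Measure.map_apply hZmeas measurableSet_Iic]
    exact hPZM
  have hM1 : cdf ν M = 1 := by rw [cdf_eq_real, measureReal_def, hνM]; simp
  set q : ℝ → ℝ := Stmt11.qt ν M with hq
  have hqmeas : Measurable q := Stmt11.qt_measurable hM1
  haveI : IsProbabilityMeasure (volume.restrict (Set.Icc (0:ℝ) 1)) :=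
    ⟨by simp [Real.volume_Icc]⟩
  -- integrability of q
  have hid_ν : Integrable id ν := by
    rw [hν]
    exact (integrable_map_measure aestronglyMeasurable_id hZmeas.aemeasurable).mpr
      (by simpa using hZint)
  have hq_int_unif : Integrable q (volume.restrict (Set.Icc (0:ℝ) 1)) := by
    have h1 : Integrable id (Measure.map q (volume.restrict (Set.Icc (0:ℝ) 1))) := by
      rw [Stmt11.qt_map_eq hM1]; exact hid_ν
    have := (integrable_map_measure aestronglyMeasurable_id hqmeas.aemeasurable).mp h1
    simpa using this
  have hq_int_Icc : IntegrableOn q (Set.Icc (0:ℝ) 1) volume := hq_int_unif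
  have hq_int_Ioc : IntegrableOn q (Set.Ioc (0:ℝ) 1) volume :=
    hq_int_Icc.mono_set Set.Ioc_subset_Icc_self
  -- expected value as an integral of q
  have hEZ : ∫ x, Z x ∂P = ∫ t in Set.Ioc (0:ℝ) 1, q t := by
    have h1 : ∫ x, x ∂ν = ∫ x, Z x ∂P := by
      rw [hν]
      exact integral_map hZmeas.aemeasurable aestronglyMeasurable_id
    have h2 : ∫ x, x ∂ν = ∫ t in Set.Icc (0:ℝ) 1, q t := by
      conv_lhs => rw [← Stmt11.qt_map_eq (ν := ν) (M := M) hM1]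
      exact integral_map hqmeas.aemeasurable aestronglyMeasurable_id
    rw [← h1, h2, MeasureTheory.integral_Icc_eq_integral_Ioc]
  -- the function g and the measurable set A
  set g : (Fin m → ℝ) → ℝ := fun z =>
    ∑ k : Fin (m+1), μ k * (if h : (k:ℕ) < m then sortedVec z ⟨(k:ℕ), h⟩ else M) with hg
  set A : Set (Fin m → ℝ) := {z | (∫ x, Z x ∂P) ≤ g z} with hA
  have hA_meas : MeasurableSet A := Stmt11.measurable_gset μ M _
  -- laws of the two vectors
  have hVq_meas : Measurable (fun ω (i : Fin m) => q (Us i ω)) :=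
    measurable_pi_lambda _ (fun i => hqmeas.comp (hUs_meas i))
  have hVz_meas : Measurable (fun ω (i : Fin m) => Zs i ω) :=
    measurable_pi_lambda _ (fun i => hZs_meas i)
  have hq_law : ∀ i : Fin m, Measure.map (q ∘ Us i) P = ν := by
    intro i
    rw [← Measure.map_map hqmeas (hUs_meas i), hUs_law i, Stmt11.qt_map_eq hM1]
  have hmapU : Measure.map (fun ω (i : Fin m) => q (Us i ω)) P = Measure.pi (fun _ => ν) :=
    Stmt11.map_pi_of_iid P (fun i => q ∘ Us i) (fun i => hqmeas.comp (hUs_meas i))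
      (hUs_indep.comp (fun _ => q) (fun _ => hqmeas)) ν hq_law
  have hmapZ : Measure.map (fun ω (i : Fin m) => Zs i ω) P = Measure.pi (fun _ => ν) :=
    Stmt11.map_pi_of_iid P Zs hZs_meas hZs_indep ν (fun i => (hZs_law i).trans hν.symm)
  -- transfer of probabilities
  have hPB : P {ω | (∫ x, Z x ∂P) ≤ g (fun i => q (Us i ω))}
      = P {ω | (∫ x, Z x ∂P) ≤ g (fun i => Zs i ω)} := by
    have h1 : {ω | (∫ x, Z x ∂P) ≤ g (fun i => q (Us i ω))}
        = (fun ω (i : Fin m) => q (Us i ω)) ⁻¹' A := rfl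
    have h2 : {ω | (∫ x, Z x ∂P) ≤ g (fun i => Zs i ω)}
        = (fun ω (i : Fin m) => Zs i ω) ⁻¹' A := rfl
    rw [h1, h2, ← Measure.map_apply hVq_meas hA_meas, ← Measure.map_apply hVz_meas hA_meas,
      hmapU, hmapZ]
  -- null events
  have hC : P {ω | ¬ ∀ i : Fin m, Us i ω ∈ Set.Ioc (0:ℝ) 1} = 0 := by
    have hsub : {ω | ¬ ∀ i : Fin m, Us i ω ∈ Set.Ioc (0:ℝ) 1}
        ⊆ ⋃ i : Fin m, Us i ⁻¹' (Set.Ioc (0:ℝ) 1)ᶜ := by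
      intro ω hω
      simp only [Set.mem_setOf_eq, not_forall] at hω
      obtain ⟨i, hi⟩ := hω
      exact Set.mem_iUnion.mpr ⟨i, hi⟩
    refine measure_mono_null hsub ?_
    apply measure_iUnion_null
    · 
      intro i
      rw [← Measure.map_apply (hUs_meas i) measurableSet_Ioc.compl, hUs_law i,
        Measure.restrict_apply' measurableSet_Icc]
      have : (Set.Ioc (0:ℝ) 1)ᶜ ∩ Set.Icc (0:ℝ) 1 = {(0:ℝ)} := by
        ext t
        simp only [Set.mem_inter_iff, Set.mem_compl_iff, Set.mem_Ioc, Set.mem_Icc,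
          Set.mem_singleton_iff, not_and, not_le]
        constructor
        · rintro ⟨h1, h2, h3⟩
          rcases eq_or_lt_of_le h2 with h | h
          · exact h.symm
          · exact absurd h3 (not_le.mpr (h1 h))
        · rintro rfl
          exact ⟨fun h => absurd h (lt_irrefl 0), le_rfl, zero_le_one⟩
      rw [this]
      simp
  have hD : P {ω | ¬ ∀ i : Fin m, Zs i ω ≤ M} = 0 := by
    have hsub : {ω | ¬ ∀ i : Fin m, Zs i ω ≤ M}
        ⊆ ⋃ i : Fin m, Zs i ⁻¹' (Set.Iic M)ᶜ := by
      intro ω hω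
      simp only [Set.mem_setOf_eq, not_forall] at hω
      obtain ⟨i, hi⟩ := hω
      exact Set.mem_iUnion.mpr ⟨i, fun h => hi h⟩
    refine measure_mono_null hsub ?_
    apply measure_iUnion_null
    · 
      intro i
      rw [← Measure.map_apply (hZs_meas i) measurableSet_Iic.compl, hZs_law i]
      exact (prob_compl_eq_zero_iff measurableSet_Iic).mpr hνM
  -- deterministic step on the U-side
  have hincl1 : ∀ ω, (∀ k : Fin (m+1),
        ∑ i ∈ Finset.univ.filter (fun i : Fin (m+1) => i ≤ k), μ i
          ≤ augOrder (fun i => Us i ω) k) →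
      (∀ i : Fin m, Us i ω ∈ Set.Ioc (0:ℝ) 1) →
      (∫ x, Z x ∂P) ≤ g (fun i => q (Us i ω)) := by
    intro ω hS hCω
    set u : Fin m → ℝ := fun i => Us i ω with hu
    have hv : ∀ k : Fin (m+1), augOrder u k ∈ Set.Ioc (0:ℝ) 1 := by
      intro k
      unfold augOrder
      split
      · exact hCω _
      · exact ⟨zero_lt_one, le_rfl⟩
    have hkey := Stmt11.key_integral μ hμ_nonneg hμ_sum q hq_int_Ioc
      (Stmt11.qt_monotoneOn hM1) (augOrder u) hv hS
    rw [hEZ]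
    refine le_trans hkey ?_
    apply Finset.sum_le_sum
    intro k _
    have hcomp : sortedVec (fun i => q (u i)) = fun j => q (sortedVec u j) := by
      have := Stmt11.sorted_comp q (Set.Ioc (0:ℝ) 1) (Stmt11.qt_monotoneOn hM1) u hCω
      exact this
    by_cases h : (k:ℕ) < m
    · have hk1 : (k:ℕ) + 1 < m + 1 := by omega
      have h1 : augOrder u k = sortedVec u ⟨(k:ℕ), h⟩ := dif_pos hk1
      rw [h1]
      simp only [dif_pos h]
      apply le_of_eq
      exact congrArg (fun x => μ k * x) (congrFun hcomp ⟨(k:ℕ), h⟩).symm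
    · have h1 : augOrder u k = 1 := dif_neg (by omega)
      rw [h1]
      simp only [dif_neg h]
      exact mul_le_mul_of_nonneg_left
        (Stmt11.qt_le_M hM1 ⟨zero_lt_one, le_rfl⟩) (hμ_nonneg k)
  -- deterministic step on the Z-side
  have hincl2 : ∀ ω, (∀ i : Fin m, Zs i ω ≤ M) →
      g (fun i => Zs i ω) = ∑ i, μ i * sortedVec (fun j => fullVec Zs M j ω) i := by
    intro ω hDω
    have hfull : (fun j : Fin (m+1) => fullVec Zs M j ω)
        = (fun k : Fin (m+1) =>
            if h : (k:ℕ) < m then (fun i : Fin m => Zs i ω) ⟨(k:ℕ), h⟩ else M) := rfl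
    rw [hfull, Stmt11.sorted_full (fun i : Fin m => Zs i ω) M hDω, hg]
  -- assembling
  set EU : Set Ω := {ω | ∀ k : Fin (m+1),
      ∑ i ∈ Finset.univ.filter (fun i : Fin (m+1) => i ≤ k), μ i
        ≤ augOrder (fun i => Us i ω) k} with hEU
  set C : Set Ω := {ω | ∀ i : Fin m, Us i ω ∈ Set.Ioc (0:ℝ) 1} with hCdef
  set B1 : Set Ω := {ω | (∫ x, Z x ∂P) ≤ g (fun i => q (Us i ω))} with hB1
  set B2 : Set Ω := {ω | (∫ x, Z x ∂P) ≤ g (fun i => Zs i ω)} with hB2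
  set D : Set Ω := {ω | ∀ i : Fin m, Zs i ω ≤ M} with hDdef
  have step1 : P EU ≤ P (EU ∩ C) := by
    calc P EU ≤ P ((EU ∩ C) ∪ Cᶜ) := by
          apply measure_mono
          intro ω hω
          by_cases hc : ω ∈ C
          · exact Or.inl ⟨hω, hc⟩
          · exact Or.inr hc
      _ ≤ P (EU ∩ C) + P Cᶜ := measure_union_le _ _
      _ = P (EU ∩ C) := by
          have : P Cᶜ = 0 := hC
          rw [this, add_zero]
  have step2 : P (EU ∩ C) ≤ P B1 :=
    measure_mono (fun ω hω => hincl1 ω hω.1 hω.2)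
  have step4 : P B2 ≤ P {ω | (∫ x, Z x ∂P) ≤ ∑ i, μ i * sortedVec (fun j => fullVec Zs M j ω) i} := by
    calc P B2 ≤ P ((B2 ∩ D) ∪ Dᶜ) := by
          apply measure_mono
          intro ω hω
          by_cases hd : ω ∈ D
          · exact Or.inl ⟨hω, hd⟩
          · exact Or.inr hd
      _ ≤ P (B2 ∩ D) + P Dᶜ := measure_union_le _ _
      _ = P (B2 ∩ D) := by
          have : P Dᶜ = 0 := hD
          rw [this, add_zero]
      _ ≤ _ := by
          apply measure_mono
          rintro ω ⟨hω1, hω2⟩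
          have := hincl2 ω hω2
          simp only [Set.mem_setOf_eq]
          rw [← this]
          exact hω1
  calc P EU ≤ P (EU ∩ C) := step1
    _ ≤ P B1 := step2
    _ = P B2 := hPB
    _ ≤ _ := step4
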